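/- A non-expansive self-mapping T of a weak metric space (X,δ) is firm if and only if inf { τ(x,y) : x,y ∈ X, A(x,y) < δ(Tx,Ty) } > 0, where M(x,y) = max(δ(x,y), δ(x,Tx), δ(y,Ty)), A(x,y) = (δ(x,Ty)+δ(Tx,y))/2, and τ(x,y) = (M(x,y) − δ(Tx,Ty)) / (2(M(x,y) − A(x,y))). -/
import Mathlib


open Filter Topology

def IsWeakMetric {X : Type*} (δ : X → X → ℝ) : Prop :=
  (∀ x, δ x x = 0) ∧ (∀ x y, 0 ≤ δ x y) ∧ (∀ x y z, δ x z ≤ δ x y + δ y z)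

def IsNonexpansive {X : Type*} (δ : X → X → ℝ) (T : X → X) : Prop :=
  ∀ x y, δ (T x) (T y) ≤ δ x y

def IsFirm {X : Type*} (δ : X → X → ℝ) (T : X → X) : Prop :=
  ∃ q r s t : X → X → ℝ,
    (∀ x y, 0 ≤ q x y) ∧ (∀ x y, 0 ≤ r x y) ∧ (∀ x y, 0 ≤ s x y) ∧ (∀ x y, 0 ≤ t x y) ∧
    (∃ α > 0, ∀ x y, α ≤ t x y) ∧
    (∀ x y, q x y + r x y + s x y + 2 * t x y ≤ 1) ∧
    (∀ x y, δ (T x) (T y) ≤ q x y * δ x y + r x y * δ x (T x) + s x y * δ y (T y)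
      + t x y * (δ x (T y) + δ (T x) y))

theorem stmt14 {X : Type*} (δ : X → X → ℝ) (T : X → X)
    (hδ : IsWeakMetric δ) (hT : IsNonexpansive δ T)
    (M A τ : X → X → ℝ)
    (hM : ∀ x y, M x y = max (δ x y) (max (δ x (T x)) (δ y (T y))))
    (hA : ∀ x y, A x y = (δ x (T y) + δ (T x) y) / 2)
    (hτ : ∀ x y, τ x y = (M x y - δ (T x) (T y)) / (2 * (M x y - A x y))) :
    IsFirm δ T ↔ ∃ c > 0, ∀ x y : X, A x y < δ (T x) (T y) → c ≤ τ x y := by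
  obtain ⟨hδ0, hδnn, hδtri⟩ := hδ
  constructor
  · rintro ⟨q, r, s, t, hq, hr, hs, ht, ⟨α, hα, hαt⟩, hsum, hineq⟩
    refine ⟨α, hα, fun x y hAlt => ?_⟩
    have hdm : δ x y ≤ M x y := by rw [hM]; exact le_max_left _ _
    have h1 : δ x (T x) ≤ M x y := by rw [hM]; exact le_max_of_le_right (le_max_left _ _)
    have h2 : δ y (T y) ≤ M x y := by rw [hM]; exact le_max_of_le_right (le_max_right _ _)
    have hTle : δ (T x) (T y) ≤ δ x y := hT x y
    have hAM : A x y < M x y := lt_of_lt_of_le hAlt (hTle.trans hdm)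
    have hMnn : (0:ℝ) ≤ M x y := (hδnn x y).trans hdm
    have key : δ (T x) (T y) ≤ (1 - 2 * t x y) * M x y + 2 * t x y * A x y := by
      have := hineq x y
      have e1 : q x y * δ x y ≤ q x y * M x y := mul_le_mul_of_nonneg_left hdm (hq x y)
      have e2 : r x y * δ x (T x) ≤ r x y * M x y := mul_le_mul_of_nonneg_left h1 (hr x y)
      have e3 : s x y * δ y (T y) ≤ s x y * M x y := mul_le_mul_of_nonneg_left h2 (hs x y)
      have e4 : t x y * (δ x (T y) + δ (T x) y) = 2 * t x y * A x y := by
        rw [hA]; ring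
      have hs1 : q x y + r x y + s x y ≤ 1 - 2 * t x y := by linarith [hsum x y]
      nlinarith [mul_le_mul_of_nonneg_right hs1 hMnn]
    rw [hτ]
    rw [le_div_iff₀ (by linarith)]
    have hαle := hαt x y
    nlinarith [mul_le_mul_of_nonneg_right hαle (by linarith : (0:ℝ) ≤ M x y - A x y)]
  · rintro ⟨c, hc, hτc⟩
    set t0 : ℝ := min c (1/2) with ht0
    have ht0pos : 0 < t0 := lt_min hc (by norm_num)
    have ht0half : t0 ≤ 1/2 := min_le_right _ _
    have ht0c : t0 ≤ c := min_le_left _ _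
    refine ⟨(fun x y => if M x y = δ x y then 1 - 2*t0 else 0),
      (fun x y => if M x y ≠ δ x y ∧ M x y = δ x (T x) then 1 - 2*t0 else 0),
      (fun x y => if M x y ≠ δ x y ∧ M x y ≠ δ x (T x) then 1 - 2*t0 else 0),
      (fun _ _ => t0), ?_, ?_, ?_, fun _ _ => le_of_lt ht0pos,
      ⟨t0, ht0pos, fun _ _ => le_refl _⟩, ?_, ?_⟩
    · intro x y; dsimp only; split <;> linarith
    · intro x y; dsimp only; split <;> linarith
    · intro x y; dsimp only; split <;> linarith
    · intro x y; dsimp only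
      by_cases h1 : M x y = δ x y
      · rw [if_pos h1, if_neg (fun h => h.1 h1), if_neg (fun h => h.1 h1)]; linarith
      · by_cases h2 : M x y = δ x (T x)
        · rw [if_neg h1, if_pos ⟨h1, h2⟩, if_neg (fun h => h.2 h2)]; linarith
        · rw [if_neg h1, if_neg (fun h => h2 h.2), if_pos ⟨h1, h2⟩]; linarith
    · intro x y; dsimp only
      have hTle : δ (T x) (T y) ≤ δ x y := hT x y
      have hdm : δ x y ≤ M x y := by rw [hM]; exact le_max_left _ _
      have e4 : t0 * (δ x (T y) + δ (T x) y) = 2 * t0 * A x y := by rw [hA]; ring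
      have key : δ (T x) (T y) ≤ (1 - 2 * t0) * M x y + 2 * t0 * A x y := by
        by_cases hcase : A x y < δ (T x) (T y)
        · have hτle := hτc x y hcase
          rw [hτ] at hτle
          have hAM : A x y < M x y := lt_of_lt_of_le hcase (hTle.trans hdm)
          rw [le_div_iff₀ (by linarith)] at hτle
          nlinarith [mul_le_mul_of_nonneg_right ht0c (by linarith : (0:ℝ) ≤ M x y - A x y)]
        · push_neg at hcase
          nlinarith [mul_nonneg (by linarith : (0:ℝ) ≤ 1 - 2*t0)
              (by linarith : (0:ℝ) ≤ M x y - δ (T x) (T y)),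
            mul_nonneg (le_of_lt ht0pos)
              (by linarith : (0:ℝ) ≤ A x y - δ (T x) (T y))]
      have hM3 : M x y = δ x y ∨ M x y = δ x (T x) ∨ M x y = δ y (T y) := by
        rw [hM]
        rcases max_choice (δ x y) (max (δ x (T x)) (δ y (T y))) with h | h
        · exact Or.inl h
        · rcases max_choice (δ x (T x)) (δ y (T y)) with h' | h' <;> rw [h, h']
          · exact Or.inr (Or.inl rfl)
          · exact Or.inr (Or.inr rfl)
      by_cases h1 : M x y = δ x y
      · rw [if_pos h1, if_neg (fun h => h.1 h1), if_neg (fun h => h.1 h1),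
          zero_mul, zero_mul, ← h1]
        linarith [key, e4]
      · by_cases h2 : M x y = δ x (T x)
        · rw [if_neg h1, if_pos ⟨h1, h2⟩, if_neg (fun h => h.2 h2),
            zero_mul, zero_mul, ← h2]
          linarith [key, e4]
        · have h3 : M x y = δ y (T y) := by tauto
          rw [if_neg h1, if_neg (fun h => h2 h.2), if_pos ⟨h1, h2⟩,
            zero_mul, zero_mul, ← h3]
          linarith [key, e4]
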